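/- arXiv:2212.09484 — 3 statements merged into one kernel-verified Lean document; each statement's English description precedes it below -/
import Mathlib

section
/- Let G be a finite group with maximal subgroups M_1, ..., M_t. Then h(G) = 2·( Σ_r h(M_r) − Σ_{r1<r2} h(M_{r1} ∩ M_{r2}) + ... + (−1)^{t−1} h(M_1 ∩ ... ∩ M_t) ), i.e., h(G) = 2·Σ_{∅≠S⊆{1,...,t}} (−1)^{|S|+1} h(⋂_{r∈S} M_r), provided G is nontrivial. -/
/-- The number of nonempty chains of subgroups of `G` (under strict inclusion,
i.e. finite sets of subgroups that are totally ordered) whose largest element is `G` itself. -/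
noncomputable def numChains (G : Type*) [Group G] : ℕ :=
  Nat.card {C : Finset (Subgroup G) //
    IsChain (· ≤ ·) (C : Set (Subgroup G)) ∧ (⊤ : Subgroup G) ∈ C}

open Finset

private lemma nat_card_filter {α : Type*} [Fintype α] (p : α → Prop) [DecidablePred p] :
    Nat.card {x // p x} = #(Finset.univ.filter p) := by
  rw [Nat.card_eq_fintype_card, Fintype.card_subtype]

private lemma mem_inf'_iff {ι α : Type*} [DecidableEq α] {S : Finset ι} (hS : S.Nonempty)
    (f : ι → Finset α) (a : α) : a ∈ S.inf' hS f ↔ ∀ i ∈ S, a ∈ f i := by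
  induction hS using Finset.Nonempty.cons_induction with
  | singleton i => simp
  | cons i s hi hs ih =>
      rw [Finset.inf'_cons hs]
      simp [Finset.inf_eq_inter, Finset.mem_inter, ih, Finset.forall_mem_cons]

section Aux

variable {G : Type*} [Group G]

private lemma isChain_coe_singleton (K : Subgroup G) :
    IsChain (· ≤ ·) (({K} : Finset (Subgroup G)) : Set (Subgroup G)) := by
  rw [coe_singleton]
  exact Set.subsingleton_singleton.isChain

private lemma aux_numChains_subgroup (K : Subgroup G) :
    numChains ↥K = Nat.card {C : Finset (Subgroup G) //
      IsChain (· ≤ ·) (C : Set (Subgroup G)) ∧ K ∈ C ∧ ∀ H ∈ C, H ≤ K} := by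
  classical
  apply Nat.card_congr
  refine
    { toFun := fun C => ⟨C.1.image (Subgroup.map K.subtype), ?_, ?_, ?_⟩
      invFun := fun D => ⟨D.1.image (fun H => H.subgroupOf K), ?_, ?_⟩
      left_inv := ?_
      right_inv := ?_ }
  · rw [coe_image]
    exact IsChain.image_of_map_rel _ _ _ (fun x y h => Subgroup.map_subtype_le_map_subtype.mpr h) C.2.1
  · refine mem_image.mpr ⟨⊤, C.2.2, ?_⟩
    rw [← MonoidHom.range_eq_map, Subgroup.range_subtype]
  · intro H hH
    obtain ⟨L, -, rfl⟩ := mem_image.mp hH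
    exact Subgroup.map_subtype_le L
  · rw [coe_image]
    refine IsChain.image_of_map_rel _ _ _ (fun x y h => ?_) D.2.1
    rw [← Subgroup.comap_subtype, ← Subgroup.comap_subtype]
    exact Subgroup.comap_mono h
  · exact mem_image.mpr ⟨K, D.2.2.1, Subgroup.subgroupOf_self K⟩
  · rintro ⟨C, hC⟩
    refine Subtype.ext ?_
    simp only [image_image]
    refine (image_congr fun L _ => ?_).trans image_id
    show (Subgroup.map K.subtype L).subgroupOf K = L
    rw [← Subgroup.comap_subtype]
    exact Subgroup.comap_map_eq_self_of_injective K.subtype_injective L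
  · rintro ⟨D, hD⟩
    refine Subtype.ext ?_
    simp only [image_image]
    refine (image_congr fun H hH => ?_).trans image_id
    show (H.subgroupOf K).map K.subtype = H
    rw [Subgroup.subgroupOf_map_subtype, inf_eq_left.mpr (hD.2.2 H hH)]

private lemma aux_g_eq [Finite G] (K : Subgroup G) :
    Nat.card {C : Finset (Subgroup G) //
        IsChain (· ≤ ·) (C : Set (Subgroup G)) ∧ K ∈ C ∧ ∀ H ∈ C, H ≤ K} =
    1 + Nat.card {C : Finset (Subgroup G) //
        IsChain (· ≤ ·) (C : Set (Subgroup G)) ∧ C.Nonempty ∧ K ∉ C ∧ ∀ H ∈ C, H ≤ K} := by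
  classical
  haveI : Fintype (Subgroup G) := Fintype.ofFinite _
  rw [nat_card_filter, nat_card_filter]
  rw [← card_filter_add_card_filter_not
    (s := univ.filter fun C : Finset (Subgroup G) =>
      IsChain (· ≤ ·) (C : Set (Subgroup G)) ∧ K ∈ C ∧ ∀ H ∈ C, H ≤ K)
    (p := fun C => C = ({K} : Finset (Subgroup G)))]
  congr 1
  · rw [filter_filter]
    have : (univ.filter fun C : Finset (Subgroup G) =>
        (IsChain (· ≤ ·) (C : Set (Subgroup G)) ∧ K ∈ C ∧ ∀ H ∈ C, H ≤ K) ∧ C = {K})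
        = {({K} : Finset (Subgroup G))} := by
      ext C
      simp only [mem_filter, mem_univ, true_and, mem_singleton]
      constructor
      · exact fun h => h.2
      · rintro rfl
        exact ⟨⟨isChain_coe_singleton K, mem_singleton_self K,
          fun H hH => (mem_singleton.mp hH).le⟩, rfl⟩
    rw [this, card_singleton]
  · rw [filter_filter]
    refine card_bij' (fun C _ => C.erase K) (fun C _ => insert K C) ?_ ?_ ?_ ?_
    · intro C hC
      rw [mem_filter] at hC ⊢
      obtain ⟨-, ⟨hch, hK, hbd⟩, hne⟩ := hC
      refine ⟨mem_univ _, hch.mono (coe_subset.mpr (erase_subset K C)), ?_,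
          notMem_erase K C, fun H hH => hbd H (erase_subset K C hH)⟩
      rw [Finset.nonempty_iff_ne_empty]
      intro h
      apply hne
      rw [← insert_erase hK, h, insert_empty_eq]
    · intro C hC
      rw [mem_filter] at hC ⊢
      obtain ⟨-, hch, hne, hK, hbd⟩ := hC
      refine ⟨mem_univ _, ⟨?_, mem_insert_self K C, ?_⟩, ?_⟩
      · rw [coe_insert]
        exact hch.insert fun b hb _ => Or.inr (hbd b hb)
      · intro H hH
        rcases mem_insert.mp hH with rfl | h
        · exact le_rfl
        · exact hbd H h
      · intro h
        obtain ⟨x, hx⟩ := hne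
        have : x ∈ ({K} : Finset (Subgroup G)) := h ▸ subset_insert K C hx
        rw [mem_singleton] at this
        exact hK (this ▸ hx)
    · intro C hC
      exact insert_erase (mem_filter.mp hC).2.1.2.1
    · intro C hC
      exact erase_insert (mem_filter.mp hC).2.2.2.1

private lemma aux_F_eq [Finite G] (K : Subgroup G) :
    Nat.card {C : Finset (Subgroup G) //
        IsChain (· ≤ ·) (C : Set (Subgroup G)) ∧ C.Nonempty ∧ ∀ H ∈ C, H ≤ K} =
    Nat.card {C : Finset (Subgroup G) //
        IsChain (· ≤ ·) (C : Set (Subgroup G)) ∧ K ∈ C ∧ ∀ H ∈ C, H ≤ K} +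
    Nat.card {C : Finset (Subgroup G) //
        IsChain (· ≤ ·) (C : Set (Subgroup G)) ∧ C.Nonempty ∧ K ∉ C ∧ ∀ H ∈ C, H ≤ K} := by
  classical
  haveI : Fintype (Subgroup G) := Fintype.ofFinite _
  rw [nat_card_filter, nat_card_filter, nat_card_filter]
  rw [← card_filter_add_card_filter_not
    (s := univ.filter fun C : Finset (Subgroup G) =>
      IsChain (· ≤ ·) (C : Set (Subgroup G)) ∧ C.Nonempty ∧ ∀ H ∈ C, H ≤ K)
    (p := fun C => K ∈ C)]
  congr 1
  · rw [filter_filter]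
    refine congrArg Finset.card (filter_congr fun C _ => ?_)
    constructor
    · rintro ⟨⟨h1, -, h3⟩, h4⟩
      exact ⟨h1, h4, h3⟩
    · rintro ⟨h1, h2, h3⟩
      exact ⟨⟨h1, ⟨K, h2⟩, h3⟩, h2⟩
  · rw [filter_filter]
    refine congrArg Finset.card (filter_congr fun C _ => ?_)
    constructor
    · rintro ⟨⟨h1, h2, h3⟩, h4⟩
      exact ⟨h1, h2, h4, h3⟩
    · rintro ⟨h1, h2, h3, h4⟩
      exact ⟨⟨h1, h2, h4⟩, h3⟩

private lemma aux_top :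
    numChains G = Nat.card {C : Finset (Subgroup G) //
      IsChain (· ≤ ·) (C : Set (Subgroup G)) ∧ (⊤ : Subgroup G) ∈ C ∧
        ∀ H ∈ C, H ≤ (⊤ : Subgroup G)} :=
  Nat.card_congr (Equiv.subtypeEquivRight fun C => by
    simp only [le_top, implies_true, and_true])

end Aux

theorem numChains_inclusion_exclusion {G : Type*} [Group G] [Finite G] [Nontrivial G]
    (t : ℕ) (M : Fin t → Subgroup G) (hinj : Function.Injective M)
    (hmax : ∀ H : Subgroup G, H ∈ Set.range M ↔ IsCoatom H) :
    (numChains G : ℤ) =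
      2 * ∑ S ∈ Finset.univ.powerset.filter (fun S : Finset (Fin t) => S.Nonempty),
        (-1 : ℤ) ^ (S.card + 1) * numChains ↥(⨅ r ∈ S, M r) := by
  classical
  haveI : Fintype (Subgroup G) := Fintype.ofFinite _
  haveI ht : Nonempty (Fin t) := by
    obtain h | ⟨m, hm, -⟩ := eq_top_or_exists_le_coatom (⊥ : Subgroup G)
    · exact absurd h bot_ne_top
    · obtain ⟨r, -⟩ := (hmax m).mpr hm
      exact ⟨r⟩
  set A : Fin t → Finset (Finset (Subgroup G)) :=
    fun r => univ.filter fun C =>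
      IsChain (· ≤ ·) (C : Set (Subgroup G)) ∧ C.Nonempty ∧ ∀ H ∈ C, H ≤ M r with hA
  set B : Finset (Fin t) → Finset (Finset (Subgroup G)) :=
    fun S => univ.filter fun C =>
      IsChain (· ≤ ·) (C : Set (Subgroup G)) ∧ C.Nonempty ∧ ∀ H ∈ C, H ≤ ⨅ r ∈ S, M r with hB
  have hinf : ∀ (S : Finset (Fin t)) (hS : S.Nonempty), S.inf' hS A = B S := by
    intro S hS
    ext C
    rw [mem_inf'_iff]
    simp only [hA, hB, mem_filter, mem_univ, true_and]
    constructor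
    · intro h
      obtain ⟨r0, hr0⟩ := hS
      exact ⟨(h r0 hr0).1, (h r0 hr0).2.1,
        fun H hH => le_iInf fun r => le_iInf fun hr => (h r hr).2.2 H hH⟩
    · rintro ⟨h1, h2, h3⟩ r hr
      exact ⟨h1, h2, fun H hH => (h3 H hH).trans (iInf_le_of_le r (iInf_le _ hr))⟩
  have hbiUnion : (univ : Finset (Fin t)).biUnion A =
      univ.filter fun C : Finset (Subgroup G) =>
        IsChain (· ≤ ·) (C : Set (Subgroup G)) ∧ C.Nonempty ∧ (⊤ : Subgroup G) ∉ C := by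
    ext C
    simp only [hA, mem_biUnion, mem_univ, true_and, mem_filter]
    constructor
    · rintro ⟨r, h1, h2, h3⟩
      refine ⟨h1, h2, fun htop => ?_⟩
      exact ((hmax (M r)).mp ⟨r, rfl⟩).1 (top_le_iff.mp (h3 _ htop))
    · rintro ⟨h1, h2, h3⟩
      obtain ⟨m, hm, hmaxm⟩ := Set.Finite.exists_maximalFor id (C : Set (Subgroup G))
        C.finite_toSet (coe_nonempty.mpr h2)
      have hmub : ∀ H ∈ C, H ≤ m := by
        intro H hH
        rcases eq_or_ne H m with rfl | hne
        · exact le_rfl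
        · rcases h1 (mem_coe.mpr hH) hm hne with h | h
          · exact h
          · exact hmaxm (mem_coe.mpr hH) h
      have hmne : m ≠ ⊤ := fun h => h3 (h ▸ mem_coe.mp hm)
      obtain hm2 | ⟨c, hc, hmc⟩ := eq_top_or_exists_le_coatom m
      · exact absurd hm2 hmne
      · obtain ⟨r, rfl⟩ := (hmax c).mpr hc
        exact ⟨r, h1, h2, fun H hH => (hmub H hH).trans hmc⟩
  have hIE : (#((univ : Finset (Fin t)).biUnion A) : ℤ)
      = ∑ S ∈ univ.powerset.filter (fun S : Finset (Fin t) => S.Nonempty),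
          (-1 : ℤ) ^ (#S + 1) * #(B S) := by
    rw [Finset.inclusion_exclusion_card_biUnion (univ : Finset (Fin t)) A,
      ← Finset.sum_coe_sort (univ.powerset.filter fun S : Finset (Fin t) => S.Nonempty)
        (fun S => (-1 : ℤ) ^ (#S + 1) * #(B S))]
    refine Finset.sum_congr rfl fun x _ => ?_
    rw [hinf x.1 (mem_filter.mp x.2).2]
  have hBcard : ∀ S : Finset (Fin t),
      (#(B S) : ℤ) = 2 * (numChains ↥(⨅ r ∈ S, M r) : ℤ) - 1 := by
    intro S
    have h4 := nat_card_filter (p := fun C : Finset (Subgroup G) =>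
      IsChain (· ≤ ·) (C : Set (Subgroup G)) ∧ C.Nonempty ∧ ∀ H ∈ C, H ≤ ⨅ r ∈ S, M r)
    simp only [hB]
    rw [← h4, aux_F_eq (⨅ r ∈ S, M r), aux_numChains_subgroup (⨅ r ∈ S, M r),
      aux_g_eq (⨅ r ∈ S, M r)]
    push_cast
    ring
  have hN : (Nat.card {C : Finset (Subgroup G) //
        IsChain (· ≤ ·) (C : Set (Subgroup G)) ∧ C.Nonempty ∧ (⊤ : Subgroup G) ∉ C ∧
          ∀ H ∈ C, H ≤ (⊤ : Subgroup G)})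
      = #((univ : Finset (Fin t)).biUnion A) := by
    rw [nat_card_filter, hbiUnion]
    refine congrArg Finset.card (filter_congr fun C _ => ?_)
    simp only [le_top, implies_true, and_true]
  have hsign : ∑ S ∈ univ.powerset.filter (fun S : Finset (Fin t) => S.Nonempty),
      (-1 : ℤ) ^ (#S + 1) = 1 := by
    have h0 : ∑ S ∈ (univ : Finset (Fin t)).powerset, (-1 : ℤ) ^ #S = 0 :=
      Finset.sum_powerset_neg_one_pow_card_of_nonempty univ_nonempty
    rw [← Finset.sum_filter_add_sum_filter_not ((univ : Finset (Fin t)).powerset)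
      (fun S => S.Nonempty) (fun S => (-1 : ℤ) ^ #S)] at h0
    have he : (univ : Finset (Fin t)).powerset.filter (fun S => ¬ S.Nonempty) = {∅} := by
      ext S
      simp [Finset.not_nonempty_iff_eq_empty]
    rw [he, Finset.sum_singleton, card_empty, pow_zero] at h0
    have : ∑ S ∈ univ.powerset.filter (fun S : Finset (Fin t) => S.Nonempty),
        (-1 : ℤ) ^ (#S + 1)
        = - ∑ S ∈ univ.powerset.filter (fun S : Finset (Fin t) => S.Nonempty),
            (-1 : ℤ) ^ #S := by
      rw [← Finset.sum_neg_distrib]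
      exact Finset.sum_congr rfl fun S _ => by ring
    rw [this]
    linarith
  have hmain : (numChains G : ℤ)
      = 1 + ∑ S ∈ univ.powerset.filter (fun S : Finset (Fin t) => S.Nonempty),
          (-1 : ℤ) ^ (#S + 1) * #(B S) := by
    rw [aux_top (G := G), aux_g_eq (⊤ : Subgroup G)]
    push_cast
    rw [hN, hIE]
  rw [hmain]
  have hexp : ∑ S ∈ univ.powerset.filter (fun S : Finset (Fin t) => S.Nonempty),
      (-1 : ℤ) ^ (#S + 1) * #(B S)
      = 2 * (∑ S ∈ univ.powerset.filter (fun S : Finset (Fin t) => S.Nonempty),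
          (-1 : ℤ) ^ (#S + 1) * (numChains ↥(⨅ r ∈ S, M r) : ℤ))
        - ∑ S ∈ univ.powerset.filter (fun S : Finset (Fin t) => S.Nonempty),
            (-1 : ℤ) ^ (#S + 1) := by
    rw [Finset.mul_sum, ← Finset.sum_sub_distrib]
    refine Finset.sum_congr rfl fun S _ => ?_
    rw [hBcard S]
    ring
  rw [hexp, hsign]
  ring
end

section
/- For n ≥ 2, h(Z/4 × Z/2^n) satisfies h(Z/4 × Z/2^n) = 2·( 2·h(Z/2 × Z/2^n) + h(Z/4 × Z/2^{n-1}) − 2·h(Z/2 × Z/2^{n-1}) ). -/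
set_option linter.unusedSectionVars false
set_option linter.unusedVariables false

open Finset

section Abstract

variable {α β : Type*}

lemma finset_finite (α : Type*) [Finite α] : Finite (Finset α) := by
  have := Fintype.ofFinite α
  classical
  infer_instance

/-- number of chains (possibly empty) -/
noncomputable def cAll (α : Type*) [Preorder α] : ℕ :=
  Nat.card {C : Finset α // IsChain (· ≤ ·) (C : Set α)}

/-- number of nonempty chains -/
noncomputable def cNE (α : Type*) [Preorder α] : ℕ :=
  Nat.card {C : Finset α // IsChain (· ≤ ·) (C : Set α) ∧ C.Nonempty}

/-- number of chains containing ⊤ -/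
noncomputable def cTop (α : Type*) [Preorder α] [OrderTop α] : ℕ :=
  Nat.card {C : Finset α // IsChain (· ≤ ·) (C : Set α) ∧ (⊤ : α) ∈ C}

section congr
variable [PartialOrder α] [PartialOrder β]

lemma isChain_map (e : α ≃o β) {C : Finset α} (h : IsChain (· ≤ ·) (C : Set α)) :
    IsChain (· ≤ ·) ((C.map e.toEquiv.toEmbedding : Finset β) : Set β) := by
  rw [Finset.coe_map]
  exact IsChain.image_of_map_rel (· ≤ ·) (· ≤ ·) e (fun x y hxy => e.monotone hxy) h

private def chainEquivAux (e : α ≃o β) (P : Finset α → Prop) (Q : Finset β → Prop)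
    (hP : ∀ C : Finset α, P C → Q (C.map e.toEquiv.toEmbedding))
    (hQ : ∀ C : Finset β, Q C → P (C.map e.symm.toEquiv.toEmbedding)) :
    {C : Finset α // P C} ≃ {C : Finset β // Q C} where
  toFun C := ⟨_, hP _ C.2⟩
  invFun C := ⟨_, hQ _ C.2⟩
  left_inv C := Subtype.ext (by ext x; simp [Finset.mem_map_equiv])
  right_inv C := Subtype.ext (by ext x; simp [Finset.mem_map_equiv])

lemma cAll_congr (e : α ≃o β) : cAll α = cAll β :=
  Nat.card_congr (chainEquivAux e _ _ (fun _ h => isChain_map e h)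
    (fun _ h => isChain_map e.symm h))

lemma cNE_congr (e : α ≃o β) : cNE α = cNE β :=
  Nat.card_congr (chainEquivAux e _ _
    (fun _ h => ⟨isChain_map e h.1, h.2.map⟩)
    (fun _ h => ⟨isChain_map e.symm h.1, h.2.map⟩))

lemma cTop_congr [OrderTop α] [OrderTop β] (e : α ≃o β) : cTop α = cTop β :=
  Nat.card_congr (chainEquivAux e _ _
    (fun C h => ⟨isChain_map e h.1, by
      rw [Finset.mem_map_equiv]
      have ht : e.symm (⊤ : β) = ⊤ := e.symm.map_top
      exact ht ▸ h.2⟩)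
    (fun C h => ⟨isChain_map e.symm h.1, by
      rw [Finset.mem_map_equiv]
      have ht : e.symm.symm (⊤ : α) = ⊤ := e.symm.symm.map_top
      exact ht ▸ h.2⟩))

end congr

section counts
variable [PartialOrder α] [Finite α]

lemma card_add_one_of_empty (Q : Finset α → Prop) (h0 : Q ∅) :
    Nat.card {C : Finset α // Q C} = Nat.card {C : Finset α // Q C ∧ C.Nonempty} + 1 := by
  classical
  have : Finite (Finset α) := finset_finite α
  have e : {C : Finset α // Q C} ≃ Option {C : Finset α // Q C ∧ C.Nonempty} :=
    { toFun := fun C => if h : C.1.Nonempty then some ⟨C.1, C.2, h⟩ else none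
      invFun := fun o => o.elim ⟨∅, h0⟩ (fun D => ⟨D.1, D.2.1⟩)
      left_inv := fun C => by
        by_cases h : C.1.Nonempty
        · simp [h]
        · have h2 : C.1 = ∅ := Finset.not_nonempty_iff_eq_empty.1 h
          simp only [h, dif_neg, not_false_iff]
          exact Subtype.ext h2.symm
      right_inv := fun o => by
        rcases o with _ | D
        · simp
        · simp [D.2.2] }
  rw [Nat.card_congr e, Nat.card_congr (Equiv.optionEquivSumPUnit.{0} _), Nat.card_sum]
  simp

lemma cAll_eq_cNE_add_one : cAll α = cNE α + 1 :=
  card_add_one_of_empty _ (by simp)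

lemma cAll_eq_two_mul_cTop [OrderTop α] : cAll α = 2 * cTop α := by
  classical
  have : Finite (Finset α) := finset_finite α
  have e : {C : Finset α // IsChain (· ≤ ·) (C : Set α)} ≃
      {C : Finset α // IsChain (· ≤ ·) (C : Set α) ∧ (⊤:α) ∈ C} ⊕
      {C : Finset α // IsChain (· ≤ ·) (C : Set α) ∧ (⊤:α) ∈ C} :=
    { toFun := fun C =>
        if h : (⊤:α) ∈ C.1 then Sum.inl ⟨C.1, C.2, h⟩
        else Sum.inr ⟨insert ⊤ C.1, by
          refine ⟨?_, Finset.mem_insert_self _ _⟩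
          rw [Finset.coe_insert]
          exact C.2.insert (fun b _ _ => Or.inr le_top)⟩
      invFun := fun o => o.elim (fun D => ⟨D.1, D.2.1⟩)
        (fun D => ⟨D.1.erase ⊤, D.2.1.mono (by simp [Finset.erase_subset])⟩)
      left_inv := fun C => by
        by_cases h : (⊤:α) ∈ C.1
        · simp [h]
        · simp only [h, dif_neg, not_false_iff, Sum.elim_inr]
          exact Subtype.ext (Finset.erase_insert h)
      right_inv := fun o => by
        rcases o with D | D
        · simp [D.2.2]
        · have h : (⊤:α) ∉ D.1.erase ⊤ := Finset.notMem_erase _ _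
          simp only [h, dif_neg, not_false_iff, Sum.elim_inr]
          exact (dif_neg h).trans (congrArg Sum.inr (Subtype.ext (Finset.insert_erase D.2.2))) }
  rw [cAll, Nat.card_congr e, Nat.card_sum, cTop]
  ring

lemma cNE_add_one_eq (α : Type*) [PartialOrder α] [Finite α] [OrderTop α] :
    cNE α + 1 = 2 * cTop α := by
  rw [← cAll_eq_cNE_add_one, cAll_eq_two_mul_cTop]

lemma cTop_eq_avoid_add [OrderTop α] : cTop α = Nat.card {C : Finset α //
    (IsChain (· ≤ ·) (C : Set α) ∧ ∀ x ∈ C, x ≠ (⊤:α)) ∧ C.Nonempty} + 1 := by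
  classical
  have : Finite (Finset α) := finset_finite α
  have e : {C : Finset α // IsChain (· ≤ ·) (C : Set α) ∧ (⊤:α) ∈ C} ≃
      {C : Finset α // IsChain (· ≤ ·) (C : Set α) ∧ ∀ x ∈ C, x ≠ (⊤:α)} :=
    { toFun := fun C => ⟨C.1.erase ⊤,
        (C.2.1.mono (by simp [Finset.erase_subset])),
        fun x hx => (Finset.mem_erase.1 hx).1⟩
      invFun := fun D => ⟨insert ⊤ D.1, by
        refine ⟨?_, Finset.mem_insert_self _ _⟩
        rw [Finset.coe_insert]
        exact D.2.1.insert (fun b _ _ => Or.inr le_top)⟩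
      left_inv := fun C => Subtype.ext (Finset.insert_erase C.2.2)
      right_inv := fun D => Subtype.ext (Finset.erase_insert (by
        intro h
        exact D.2.2 ⊤ h rfl)) }
  rw [cTop, Nat.card_congr e, card_add_one_of_empty]
  exact ⟨by simp, by simp⟩

end counts
end Abstract


section MainAbs
variable {α : Type*} [Lattice α] [OrderTop α] [Finite α]

/-- nonempty chains all of whose members are ≤ M -/
def belowChains (α : Type*) [Preorder α] (M : α) : Set (Finset α) :=
  {C | IsChain (· ≤ ·) (C : Set α) ∧ C.Nonempty ∧ ∀ x ∈ C, x ≤ M}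

lemma belowChains_mono {M N : α} (h : M ≤ N) : belowChains α M ⊆ belowChains α N :=
  fun C hC => ⟨hC.1, hC.2.1, fun x hx => (hC.2.2 x hx).trans h⟩

lemma belowChains_inter {M N P : α} (h : M ⊓ N = P) :
    belowChains α M ∩ belowChains α N = belowChains α P := by
  ext C
  constructor
  · rintro ⟨⟨hc, hne, hM⟩, ⟨-, -, hN⟩⟩
    exact ⟨hc, hne, fun x hx => h ▸ le_inf (hM x hx) (hN x hx)⟩
  · intro hC
    exact ⟨belowChains_mono (h ▸ inf_le_left) hC, belowChains_mono (h ▸ inf_le_right) hC⟩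

lemma chain_mem_le_sup' {C : Finset α} (hc : IsChain (· ≤ ·) (C : Set α)) (hne : C.Nonempty) :
    C.sup' hne id ∈ C ∧ ∀ x ∈ C, x ≤ C.sup' hne id := by
  constructor
  · refine Finset.sup'_mem (↑C) ?_ C hne id (fun i hi => hi)
    intro x hx y hy
    rcases eq_or_ne x y with rfl | hxy
    · simpa using hx
    · rcases hc hx hy hxy with h | h
      · rwa [sup_eq_right.2 h]
      · rwa [sup_eq_left.2 h]
  · exact fun x hx => Finset.le_sup' id hx

lemma main_ie (M1 M2 M3 D : α)
    (h12 : M1 ⊓ M2 = D) (h13 : M1 ⊓ M3 = D) (h23 : M2 ⊓ M3 = D)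
    (hm1 : M1 ≠ ⊤) (hm2 : M2 ≠ ⊤) (hm3 : M3 ≠ ⊤)
    (hcov : ∀ x : α, x ≠ ⊤ → x ≤ M1 ∨ x ≤ M2 ∨ x ≤ M3) :
    (cTop α : ℤ) = (belowChains α M1).ncard + (belowChains α M2).ncard
      + (belowChains α M3).ncard - 2 * (belowChains α D).ncard + 1 := by
  classical
  have : Finite (Finset α) := finset_finite α
  set S1 := belowChains α M1 with hS1
  set S2 := belowChains α M2 with hS2
  set S3 := belowChains α M3 with hS3
  set SD := belowChains α D with hSD
  have hD1 : SD ⊆ S1 := belowChains_mono (h12 ▸ inf_le_left)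
  have hD2 : SD ⊆ S2 := belowChains_mono (h12 ▸ inf_le_right)
  have hD3 : SD ⊆ S3 := belowChains_mono (h13 ▸ inf_le_right)
  set U : Set (Finset α) :=
    {C | IsChain (· ≤ ·) (C : Set α) ∧ C.Nonempty ∧ ∀ x ∈ C, x ≠ (⊤:α)} with hU
  -- cTop = |U| + 1
  have step1 : cTop α = U.ncard + 1 := by
    rw [cTop_eq_avoid_add]
    congr 1
    rw [← Nat.card_coe_set_eq]
    exact Nat.card_congr (Equiv.subtypeEquivRight (fun C => by
      simp only [hU, Set.mem_setOf_eq]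
      tauto))
  -- each S_i ⊆ U
  have hSU : ∀ (M : α), M ≠ ⊤ → belowChains α M ⊆ U := by
    intro M hM C hC
    refine ⟨hC.1, hC.2.1, fun x hx hxt => hM ?_⟩
    exact top_le_iff.1 (hxt ▸ hC.2.2 x hx)
  -- U decomposition
  have hUdecomp : U = ((S1 \ SD) ∪ (S2 \ SD)) ∪ ((S3 \ SD) ∪ SD) := by
    ext C
    constructor
    · rintro ⟨hc, hne, htop⟩
      by_cases hD : C ∈ SD
      · exact Or.inr (Or.inr hD)
      · obtain ⟨hmem, hle⟩ := chain_mem_le_sup' hc hne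
        have hm : C.sup' hne id ≠ ⊤ := htop _ hmem
        have hbelow : ∀ M : α, C.sup' hne id ≤ M → C ∈ belowChains α M :=
          fun M hM => ⟨hc, hne, fun x hx => (hle x hx).trans hM⟩
        rcases hcov _ hm with h | h | h
        · exact Or.inl (Or.inl ⟨hbelow _ h, hD⟩)
        · exact Or.inl (Or.inr ⟨hbelow _ h, hD⟩)
        · exact Or.inr (Or.inl ⟨hbelow _ h, hD⟩)
    · rintro ((⟨h, -⟩ | ⟨h, -⟩) | (⟨h, -⟩ | h))
      · exact hSU _ hm1 h
      · exact hSU _ hm2 h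
      · exact hSU _ hm3 h
      · exact hSU _ hm1 (hD1 h)
  -- disjointness
  have hdisj12 : Disjoint (S1 \ SD) (S2 \ SD) := by
    rw [Set.disjoint_left]
    rintro C ⟨h1, hD⟩ ⟨h2, -⟩
    refine hD ?_
    rw [hSD, ← belowChains_inter h12]
    exact ⟨h1, h2⟩
  have hdisj13 : Disjoint (S1 \ SD) (S3 \ SD) := by
    rw [Set.disjoint_left]
    rintro C ⟨h1, hD⟩ ⟨h2, -⟩
    refine hD ?_
    rw [hSD, ← belowChains_inter h13]
    exact ⟨h1, h2⟩
  have hdisj23 : Disjoint (S2 \ SD) (S3 \ SD) := by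
    rw [Set.disjoint_left]
    rintro C ⟨h1, hD⟩ ⟨h2, -⟩
    refine hD ?_
    rw [hSD, ← belowChains_inter h23]
    exact ⟨h1, h2⟩
  have hdisjD : ∀ s : Set (Finset α), s ⊆ S1 \ SD ∪ (S2 \ SD) ∪ (S3 \ SD) → Disjoint s SD := by
    intro s hs
    refine Set.disjoint_left.2 (fun C hC hCD => ?_)
    rcases hs hC with (⟨-, h⟩ | ⟨-, h⟩) | ⟨-, h⟩ <;> exact h hCD
  -- cardinalities
  have hcard : U.ncard = (S1 \ SD).ncard + (S2 \ SD).ncard + ((S3 \ SD).ncard + SD.ncard) := by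
    rw [hUdecomp]
    rw [Set.ncard_union_eq (by
      refine Set.disjoint_union_right.2 ⟨Set.disjoint_union_left.2 ⟨hdisj13, hdisj23⟩, ?_⟩
      exact hdisjD _ (fun C hC => by rcases hC with h | h; exact Or.inl (Or.inl h); exact Or.inl (Or.inr h)))]
    rw [Set.ncard_union_eq hdisj12, Set.ncard_union_eq (hdisjD _ (fun C hC => Or.inr hC))]
  have e1 : (S1 \ SD).ncard + SD.ncard = S1.ncard :=
    Set.ncard_diff_add_ncard_of_subset hD1
  have e2 : (S2 \ SD).ncard + SD.ncard = S2.ncard :=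
    Set.ncard_diff_add_ncard_of_subset hD2
  have e3 : (S3 \ SD).ncard + SD.ncard = S3.ncard :=
    Set.ncard_diff_add_ncard_of_subset hD3
  rw [step1]
  push_cast
  omega

end MainAbs

section Below
variable {α β : Type*} [PartialOrder α] [PartialOrder β]

lemma ncard_belowChains_eq_cNE (f : β → α) (M : α)
    (hmono : ∀ a b : β, f a ≤ f b ↔ a ≤ b)
    (hrange : Set.range f = Set.Iic M) :
    (belowChains α M).ncard = cNE β := by
  classical
  have hinj : Function.Injective f := fun a b h =>
    le_antisymm ((hmono a b).1 h.le) ((hmono b a).1 h.ge)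
  rw [← Nat.card_coe_set_eq, cNE]
  refine Nat.card_congr ?_
  refine { toFun := ?_, invFun := ?_, left_inv := ?_, right_inv := ?_ }
  · rintro ⟨C, hc, hne, hle⟩
    refine ⟨C.preimage f hinj.injOn, ?_, ?_⟩
    · intro a ha b hb hab
      rw [Finset.coe_preimage, Set.mem_preimage] at ha hb
      rcases hc ha hb (fun h => hab (hinj h)) with h | h
      · exact Or.inl ((hmono a b).1 h)
      · exact Or.inr ((hmono b a).1 h)
    · obtain ⟨x, hx⟩ := hne
      have : x ∈ Set.range f := hrange ▸ (hle x hx : x ≤ M)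
      obtain ⟨b, rfl⟩ := this
      exact ⟨b, Finset.mem_preimage.2 hx⟩
  · rintro ⟨D, hc, hne⟩
    refine ⟨D.map ⟨f, hinj⟩, ?_, hne.map, ?_⟩
    · rw [Finset.coe_map]
      exact IsChain.image_of_map_rel (· ≤ ·) (· ≤ ·) f (fun x y h => (hmono x y).2 h) hc
    · intro x hx
      obtain ⟨b, hb, rfl⟩ := Finset.mem_map.1 hx
      have hm : f b ∈ Set.Iic M := hrange ▸ Set.mem_range_self b
      exact hm
  · rintro ⟨C, hc, hne, hle⟩
    apply Subtype.ext
    simp only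
    ext x
    simp only [Finset.mem_map, Finset.mem_preimage, Function.Embedding.coeFn_mk]
    constructor
    · rintro ⟨b, hb, rfl⟩; exact hb
    · intro hx
      have : x ∈ Set.range f := hrange ▸ (hle x hx : x ≤ M)
      obtain ⟨b, rfl⟩ := this
      exact ⟨b, hx, rfl⟩
  · rintro ⟨D, hc, hne⟩
    apply Subtype.ext
    simp only
    ext b
    simp [Finset.mem_preimage, Finset.mem_map, hinj.eq_iff]
end Below

example : ZMod (2*2) = ZMod 4 := rfl
example (k : ℕ) : ZMod (2^(k+1)*2) = ZMod (2^(k+2)) := rfl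

section dbl
variable (m : ℕ)

def dbl : ZMod m →+ ZMod (m*2) :=
  ZMod.lift m ⟨(zmultiplesHom (ZMod (m*2))) 2, by
    show ((m:ℕ):ℤ) • (2 : ZMod (m*2)) = 0
    have h : ((m*2 : ℕ) : ZMod (m*2)) = 0 := ZMod.natCast_self _
    rw [zsmul_eq_mul]
    push_cast at h ⊢
    linear_combination h⟩

variable [NeZero m]

lemma dbl_apply (c : ZMod m) : dbl m c = 2 * ((c.val : ℕ) : ZMod (m*2)) := by
  have hc : (((c.val : ℕ) : ℤ) : ZMod m) = c := by
    push_cast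
    rw [ZMod.natCast_val, ZMod.cast_id]
  conv_lhs => rw [← hc]
  rw [dbl, ZMod.lift_coe]
  show ((c.val : ℕ) : ℤ) • (2 : ZMod (m*2)) = _
  rw [zsmul_eq_mul]
  push_cast
  ring

lemma dbl_injective : Function.Injective (dbl m) := by
  have : NeZero (m*2) := ⟨mul_ne_zero (NeZero.ne m) two_ne_zero⟩
  intro a b hab
  have h : dbl m (a - b) = 0 := by rw [map_sub, hab, sub_self]
  rw [dbl_apply] at h
  set c := a - b with hc
  have h2 : ((2 * c.val : ℕ) : ZMod (m*2)) = 0 := by push_cast; linear_combination h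
  rw [ZMod.natCast_eq_zero_iff] at h2
  have h3 : m ∣ c.val := by
    rw [mul_comm m 2] at h2
    exact (mul_dvd_mul_iff_left (two_ne_zero' ℕ)).1 h2
  have h4 : c.val < m := ZMod.val_lt c
  have h5 : c.val = 0 := Nat.eq_zero_of_dvd_of_lt h3 h4
  have h6 : c = 0 := by rwa [ZMod.val_eq_zero] at h5
  rw [hc] at h6
  exact sub_eq_zero.1 h6

end dbl

section dbl2
variable (m : ℕ) [NeZero m]

lemma dbl_cast_eq_zero (c : ZMod m) :
    ZMod.castHom (⟨m, mul_comm m 2⟩ : (2:ℕ) ∣ m*2) (ZMod 2) (dbl m c) = 0 := by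
  rw [dbl_apply, map_mul, map_natCast, map_ofNat]
  have h : (2 : ZMod 2) = 0 := by decide
  rw [h, zero_mul]

lemma exists_dbl_eq (x : ZMod (m*2))
    (hx : ZMod.castHom (⟨m, mul_comm m 2⟩ : (2:ℕ) ∣ m*2) (ZMod 2) x = 0) :
    ∃ c : ZMod m, dbl m c = x := by
  have : NeZero (m*2) := ⟨mul_ne_zero (NeZero.ne m) two_ne_zero⟩
  rw [ZMod.castHom_apply] at hx
  have hval : ((x.val : ℕ) : ZMod 2) = 0 := by rwa [ZMod.natCast_val]
  rw [ZMod.natCast_eq_zero_iff] at hval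
  refine ⟨((x.val / 2 : ℕ) : ZMod m), ?_⟩
  rw [dbl_apply]
  have hlt : x.val / 2 < m := by
    have := ZMod.val_lt x
    omega
  have hcval : (((x.val / 2 : ℕ) : ZMod m)).val = x.val / 2 := ZMod.val_cast_of_lt hlt
  rw [hcval]
  have h2 : 2 * (x.val / 2) = x.val := by omega
  have h3 : ((2*(x.val/2) : ℕ) : ZMod (m*2)) = x := by
    rw [h2, ZMod.natCast_val, ZMod.cast_id]
  push_cast at h3
  exact h3
end dbl2



section Concrete
variable (k : ℕ)

local notation "Nbig" => 2^(k+2)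

instance : NeZero (2^(k+2)) := ⟨pow_ne_zero _ two_ne_zero⟩

lemma hdvd2n : (2:ℕ) ∣ 2^(k+2) := dvd_pow_self 2 (by omega)
lemma hdvd4n : (4:ℕ) ∣ 2^(k+2) := by
  have : (4:ℕ) = 2^2 := by norm_num
  rw [this]
  exact pow_dvd_pow 2 (by omega)

def phi1 : (ZMod 4 × ZMod (2^(k+2))) →+ ZMod 2 :=
  (ZMod.castHom (by norm_num : (2:ℕ) ∣ 4) (ZMod 2)).toAddMonoidHom.comp
    (AddMonoidHom.fst _ _)

def phi2 : (ZMod 4 × ZMod (2^(k+2))) →+ ZMod 2 :=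
  (ZMod.castHom (hdvd2n k) (ZMod 2)).toAddMonoidHom.comp (AddMonoidHom.snd _ _)

lemma phi1_apply (x : ZMod 4 × ZMod (2^(k+2))) :
    phi1 k x = ZMod.castHom (by norm_num : (2:ℕ) ∣ 4) (ZMod 2) x.1 := rfl
lemma phi2_apply (x : ZMod 4 × ZMod (2^(k+2))) :
    phi2 k x = ZMod.castHom (hdvd2n k) (ZMod 2) x.2 := rfl

def M1 : AddSubgroup (ZMod 4 × ZMod (2^(k+2))) := (phi1 k).ker
def M2 : AddSubgroup (ZMod 4 × ZMod (2^(k+2))) := (phi2 k).ker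
def M3 : AddSubgroup (ZMod 4 × ZMod (2^(k+2))) := (phi1 k + phi2 k).ker
def MD : AddSubgroup (ZMod 4 × ZMod (2^(k+2))) := M1 k ⊓ M2 k

lemma mem_M1 (x) : x ∈ M1 k ↔ phi1 k x = 0 := AddMonoidHom.mem_ker
lemma mem_M2 (x) : x ∈ M2 k ↔ phi2 k x = 0 := AddMonoidHom.mem_ker
lemma mem_M3 (x) : x ∈ M3 k ↔ phi1 k x + phi2 k x = 0 := AddMonoidHom.mem_ker
lemma mem_MD (x) : x ∈ MD k ↔ phi1 k x = 0 ∧ phi2 k x = 0 := by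
  rw [MD, AddSubgroup.mem_inf, mem_M1, mem_M2]

lemma inf13 : M1 k ⊓ M3 k = MD k := by
  ext x
  rw [AddSubgroup.mem_inf, mem_M1, mem_M3, mem_MD]
  constructor
  · rintro ⟨h1, h13⟩
    refine ⟨h1, ?_⟩
    rwa [h1, zero_add] at h13
  · rintro ⟨h1, h2⟩
    exact ⟨h1, by rw [h1, h2, add_zero]⟩

lemma inf23 : M2 k ⊓ M3 k = MD k := by
  ext x
  rw [AddSubgroup.mem_inf, mem_M2, mem_M3, mem_MD]
  constructor
  · rintro ⟨h2, h13⟩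
    refine ⟨?_, h2⟩
    rwa [h2, add_zero] at h13
  · rintro ⟨h1, h2⟩
    exact ⟨h2, by rw [h1, h2, add_zero]⟩

lemma M1_ne_top : M1 k ≠ ⊤ := by
  intro h
  have : ((1 : ZMod 4), (0 : ZMod (2^(k+2)))) ∈ M1 k := h ▸ AddSubgroup.mem_top _
  rw [mem_M1, phi1_apply] at this
  rw [map_one] at this
  exact (by decide : (1 : ZMod 2) ≠ 0) this

lemma M2_ne_top : M2 k ≠ ⊤ := by
  intro h
  have : ((0 : ZMod 4), (1 : ZMod (2^(k+2)))) ∈ M2 k := h ▸ AddSubgroup.mem_top _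
  rw [mem_M2, phi2_apply] at this
  rw [map_one] at this
  exact (by decide : (1 : ZMod 2) ≠ 0) this

lemma M3_ne_top : M3 k ≠ ⊤ := by
  intro h
  have : ((1 : ZMod 4), (0 : ZMod (2^(k+2)))) ∈ M3 k := h ▸ AddSubgroup.mem_top _
  rw [mem_M3, phi1_apply, phi2_apply] at this
  rw [map_one, map_zero, add_zero] at this
  exact (by decide : (1 : ZMod 2) ≠ 0) this

end Concrete

section Emb
variable (k : ℕ)

def psi1 : (ZMod 2 × ZMod (2^(k+2))) →+ (ZMod 4 × ZMod (2^(k+2))) :=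
  AddMonoidHom.prodMap (dbl 2) (AddMonoidHom.id _)

def psi2 : (ZMod 4 × ZMod (2^(k+1))) →+ (ZMod 4 × ZMod (2^(k+2))) :=
  AddMonoidHom.prodMap (AddMonoidHom.id _) (dbl (2^(k+1)))

def psiD : (ZMod 2 × ZMod (2^(k+1))) →+ (ZMod 4 × ZMod (2^(k+2))) :=
  AddMonoidHom.prodMap (dbl 2) (dbl (2^(k+1)))

def psi3 : (ZMod 2 × ZMod (2^(k+2))) →+ (ZMod 4 × ZMod (2^(k+2))) :=
  AddMonoidHom.prod
    ((dbl 2).comp (AddMonoidHom.fst _ _) +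
      (ZMod.castHom (hdvd4n k) (ZMod 4)).toAddMonoidHom.comp (AddMonoidHom.snd _ _))
    (AddMonoidHom.snd _ _)

lemma psi1_apply (x : ZMod 2 × ZMod (2^(k+2))) : psi1 k x = (dbl 2 x.1, x.2) := rfl
lemma psi2_apply (x : ZMod 4 × ZMod (2^(k+1))) : psi2 k x = (x.1, dbl (2^(k+1)) x.2) := rfl
lemma psiD_apply (x : ZMod 2 × ZMod (2^(k+1))) : psiD k x = (dbl 2 x.1, dbl (2^(k+1)) x.2) := rfl
lemma psi3_apply (x : ZMod 2 × ZMod (2^(k+2))) :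
    psi3 k x = (dbl 2 x.1 + ZMod.castHom (hdvd4n k) (ZMod 4) x.2, x.2) := rfl

lemma psi1_injective : Function.Injective (psi1 k) :=
  Function.Injective.prodMap (dbl_injective 2) (fun _ _ h => h)

instance : NeZero (2^(k+1)) := ⟨pow_ne_zero _ two_ne_zero⟩

lemma psi2_injective : Function.Injective (psi2 k) :=
  Function.Injective.prodMap (fun _ _ h => h) (dbl_injective (2^(k+1)))

lemma psiD_injective : Function.Injective (psiD k) :=
  Function.Injective.prodMap (dbl_injective 2) (dbl_injective (2^(k+1)))

lemma psi3_injective : Function.Injective (psi3 k) := by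
  intro x y h
  rw [psi3_apply, psi3_apply, Prod.ext_iff] at h
  obtain ⟨h1, h2⟩ := h
  simp only at h1 h2
  rw [h2] at h1
  have := add_right_cancel h1
  exact Prod.ext (dbl_injective 2 this) h2

-- cast composition: (ZMod 2^(k+2)) → ZMod 4 → ZMod 2 equals direct cast
lemma cast_comp (b : ZMod (2^(k+2))) :
    ZMod.castHom (by norm_num : (2:ℕ) ∣ 4) (ZMod 2) (ZMod.castHom (hdvd4n k) (ZMod 4) b)
      = ZMod.castHom (hdvd2n k) (ZMod 2) b := by
  exact RingHom.congr_fun (ZMod.castHom_comp (by norm_num : (2:ℕ) ∣ 4) (hdvd4n k)) b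

lemma range_psi1 : (psi1 k).range = M1 k := by
  ext x
  rw [AddMonoidHom.mem_range, mem_M1, phi1_apply]
  constructor
  · rintro ⟨⟨c, d⟩, rfl⟩
    rw [psi1_apply]
    exact dbl_cast_eq_zero 2 c
  · intro hx
    obtain ⟨c, hc⟩ := exists_dbl_eq 2 x.1 hx
    exact ⟨(c, x.2), by rw [psi1_apply]; exact Prod.ext hc rfl⟩

lemma range_psi2 : (psi2 k).range = M2 k := by
  ext x
  rw [AddMonoidHom.mem_range, mem_M2, phi2_apply]
  constructor
  · rintro ⟨⟨c, d⟩, rfl⟩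
    rw [psi2_apply]
    exact dbl_cast_eq_zero (2^(k+1)) d
  · intro hx
    obtain ⟨d, hd⟩ := exists_dbl_eq (2^(k+1)) x.2 hx
    exact ⟨(x.1, d), by rw [psi2_apply]; exact Prod.ext rfl hd⟩

lemma range_psiD : (psiD k).range = MD k := by
  ext x
  rw [AddMonoidHom.mem_range, mem_MD, phi1_apply, phi2_apply]
  constructor
  · rintro ⟨⟨c, d⟩, rfl⟩
    rw [psiD_apply]
    exact ⟨dbl_cast_eq_zero 2 c, dbl_cast_eq_zero (2^(k+1)) d⟩
  · rintro ⟨hx1, hx2⟩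
    obtain ⟨c, hc⟩ := exists_dbl_eq 2 x.1 hx1
    obtain ⟨d, hd⟩ := exists_dbl_eq (2^(k+1)) x.2 hx2
    exact ⟨(c, d), by rw [psiD_apply]; exact Prod.ext hc hd⟩

lemma range_psi3 : (psi3 k).range = M3 k := by
  ext x
  rw [AddMonoidHom.mem_range, mem_M3, phi1_apply, phi2_apply]
  constructor
  · rintro ⟨⟨c, b⟩, rfl⟩
    show ZMod.castHom (by norm_num : (2:ℕ) ∣ 4) (ZMod 2)
        (dbl 2 c + ZMod.castHom (hdvd4n k) (ZMod 4) b)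
      + ZMod.castHom (hdvd2n k) (ZMod 2) b = 0
    have e1 : (ZMod.castHom (by norm_num : (2:ℕ) ∣ 4) (ZMod 2)) ((dbl 2) c) = 0 :=
      dbl_cast_eq_zero 2 c
    rw [map_add, e1, cast_comp, zero_add]
    exact (by decide : ∀ u : ZMod 2, u + u = 0) _
  · intro hx
    have hx1 : ZMod.castHom (by norm_num : (2:ℕ) ∣ 4) (ZMod 2)
        (x.1 - ZMod.castHom (hdvd4n k) (ZMod 4) x.2) = 0 := by
      rw [map_sub, cast_comp]
      have hneg : ∀ u v : ZMod 2, u + v = 0 → u - v = 0 := by decide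
      exact hneg _ _ hx
    obtain ⟨c, hc⟩ := exists_dbl_eq 2 _ hx1
    refine ⟨(c, x.2), ?_⟩
    rw [psi3_apply]
    refine Prod.ext ?_ rfl
    show dbl 2 c + ZMod.castHom (hdvd4n k) (ZMod 4) x.2 = x.1
    rw [hc]
    ring

end Emb

section Cover
variable (k : ℕ)

lemma val_cast_self {n : ℕ} [NeZero n] (x : ZMod n) : ((x.val : ℕ) : ZMod n) = x := by
  rw [ZMod.natCast_val, ZMod.cast_id]

lemma zmod2_cases : ∀ u : ZMod 2, u = 0 ∨ u = 1 := by decide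

-- step 1 : find (1,0)- and (0,1)- type elements mod 2
lemma step1 {H : AddSubgroup (ZMod 4 × ZMod (2^(k+2)))}
    {x y z : ZMod 4 × ZMod (2^(k+2))} (hx : x ∈ H) (hy : y ∈ H) (hz : z ∈ H)
    (hx1 : phi1 k x = 1) (hy2 : phi2 k y = 1) (hz3 : phi1 k z + phi2 k z = 1) :
    ∃ p ∈ H, ∃ q ∈ H, phi1 k p = 1 ∧ phi2 k p = 0 ∧ phi1 k q = 0 ∧ phi2 k q = 1 := by
  have add11 : (1 : ZMod 2) + 1 = 0 := by decide
  rcases zmod2_cases (phi2 k x) with hx2 | hx2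
  · -- x is (1,0)
    rcases zmod2_cases (phi1 k y) with hy1 | hy1
    · exact ⟨x, hx, y, hy, hx1, hx2, hy1, hy2⟩
    · refine ⟨x, hx, x + y, H.add_mem hx hy, hx1, hx2, ?_, ?_⟩
      · rw [map_add, hx1, hy1]; exact add11
      · rw [map_add, hx2, hy2, zero_add]
  · -- x is (1,1)
    rcases zmod2_cases (phi1 k y) with hy1 | hy1
    · -- y is (0,1); p := x + y
      refine ⟨x + y, H.add_mem hx hy, y, hy, ?_, ?_, hy1, hy2⟩
      · rw [map_add, hx1, hy1, add_zero]
      · rw [map_add, hx2, hy2]; exact add11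
    · -- x, y both (1,1); use z
      rcases zmod2_cases (phi1 k z) with hz1 | hz1
      · -- z is (0,1)
        have hz2 : phi2 k z = 1 := by rwa [hz1, zero_add] at hz3
        refine ⟨x + z, H.add_mem hx hz, z, hz, ?_, ?_, hz1, hz2⟩
        · rw [map_add, hx1, hz1, add_zero]
        · rw [map_add, hx2, hz2]; exact add11
      · -- z is (1,0)
        have hz2 : phi2 k z = 0 := by
          have := hz3
          rw [hz1] at this
          have h' : ∀ v : ZMod 2, 1 + v = 1 → v = 0 := by decide
          exact h' _ this
        refine ⟨z, hz, y + z, H.add_mem hy hz, hz1, hz2, ?_, ?_⟩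
        · rw [map_add, hy1, hz1]; exact add11
        · rw [map_add, hy2, hz2, add_zero]

-- parity facts
lemma odd_of_cast_one {n : ℕ} [NeZero n] (h2 : (2:ℕ) ∣ n) (x : ZMod n)
    (hx : ZMod.castHom h2 (ZMod 2) x = 1) : ¬ (2 ∣ x.val) := by
  intro hdvd
  rw [ZMod.castHom_apply] at hx
  have : ((x.val : ℕ) : ZMod 2) = 1 := by rwa [ZMod.natCast_val]
  rw [(ZMod.natCast_eq_zero_iff x.val 2).2 hdvd] at this
  exact (by decide : (0 : ZMod 2) ≠ 1) this

lemma even_of_cast_zero {n : ℕ} [NeZero n] (h2 : (2:ℕ) ∣ n) (x : ZMod n)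
    (hx : ZMod.castHom h2 (ZMod 2) x = 0) : 2 ∣ x.val := by
  rw [ZMod.castHom_apply] at hx
  have : ((x.val : ℕ) : ZMod 2) = 0 := by rwa [ZMod.natCast_val]
  exact (ZMod.natCast_eq_zero_iff x.val 2).1 this

-- normalize: from an element with unit second coordinate mod 2^n obtain one with second coord 1
lemma unit_smul {t : ℕ} (x : ZMod (2^t))
    (hodd : ¬ (2 ∣ x.val)) : ∃ m : ℕ, (m : ZMod (2^t)) * x = 1 := by
  have : NeZero (2^t) := ⟨pow_ne_zero _ two_ne_zero⟩
  have hcop2 : Nat.Coprime x.val 2 := Nat.coprime_two_right.2 (Nat.odd_iff.2 (by omega))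
  have hcop : Nat.Coprime x.val (2^t) := Nat.Coprime.pow_right _ hcop2
  set u := ZMod.unitOfCoprime x.val hcop
  refine ⟨((u⁻¹ : (ZMod (2^t))ˣ) : ZMod (2^t)).val, ?_⟩
  rw [val_cast_self]
  have hux : (u : ZMod (2^t)) = x := by
    rw [ZMod.coe_unitOfCoprime, val_cast_self]
  rw [← hux, ← Units.val_mul]
  simp

end Cover

section Cover2
variable (k : ℕ)

lemma val_nsmul_one {n : ℕ} [NeZero n] (x : ZMod n) : x.val • (1 : ZMod n) = x := by
  rw [nsmul_eq_mul, mul_one, val_cast_self]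

lemma cover (H : AddSubgroup (ZMod 4 × ZMod (2^(k+2))))
    (h1 : ¬ H ≤ M1 k) (h2 : ¬ H ≤ M2 k) (h3 : ¬ H ≤ M3 k) : H = ⊤ := by
  obtain ⟨x, hxH, hx⟩ := SetLike.not_le_iff_exists.1 h1
  obtain ⟨y, hyH, hy⟩ := SetLike.not_le_iff_exists.1 h2
  obtain ⟨z, hzH, hz⟩ := SetLike.not_le_iff_exists.1 h3
  rw [mem_M1] at hx; rw [mem_M2] at hy; rw [mem_M3] at hz
  have one_of : ∀ u : ZMod 2, u ≠ 0 → u = 1 := by decide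
  obtain ⟨p, hpH, q, hqH, hp1, hp2, hq1, hq2⟩ :=
    step1 k hxH hyH hzH (one_of _ hx) (one_of _ hy) (one_of _ hz)
  -- normalize p
  have hpodd : ¬ (2 ∣ p.1.val) := odd_of_cast_one (by norm_num) p.1 (by rw [← phi1_apply]; exact hp1)
  obtain ⟨m, hm⟩ := unit_smul (t := 2) p.1 hpodd
  set p' := m • p with hp'
  have hp'H : p' ∈ H := AddSubgroup.nsmul_mem H hpH m
  have hp'1 : p'.1 = 1 := by
    show (m • p).1 = 1
    rw [Prod.smul_fst, nsmul_eq_mul]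
    exact hm
  have hp'2 : 2 ∣ p'.2.val := by
    refine even_of_cast_zero (hdvd2n k) _ ?_
    rw [← phi2_apply]
    rw [hp', map_nsmul, hp2, smul_zero]
  -- normalize q
  have hqodd : ¬ (2 ∣ q.2.val) :=
    odd_of_cast_one (hdvd2n k) q.2 (by rw [← phi2_apply]; exact hq2)
  obtain ⟨m', hm'⟩ := unit_smul (t := k+2) q.2 hqodd
  set q' := m' • q with hq'
  have hq'H : q' ∈ H := AddSubgroup.nsmul_mem H hqH m'
  have hq'2 : q'.2 = 1 := by
    show (m' • q).2 = 1
    rw [Prod.smul_snd, nsmul_eq_mul]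
    exact hm'
  have hq'1 : 2 ∣ q'.1.val := by
    refine even_of_cast_zero (by norm_num) _ ?_
    rw [← phi1_apply]
    rw [hq', map_nsmul, hq1, smul_zero]
  -- r = (1, 0)
  obtain ⟨a2, ha⟩ := hp'2
  obtain ⟨b2, hb⟩ := hq'1
  have h10 : ((1 : ZMod 4), (0 : ZMod (2^(k+2)))) ∈ H := by
    have hmem : p' - p'.2.val • q' ∈ H :=
      AddSubgroup.sub_mem H hp'H (AddSubgroup.nsmul_mem H hq'H _)
    have hr : p' - p'.2.val • q' = ((1 : ZMod 4), (0 : ZMod (2^(k+2)))) := by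
      refine Prod.ext ?_ ?_
      · show p'.1 - p'.2.val • q'.1 = 1
        have hz4 : p'.2.val • q'.1 = 0 := by
          have hq1c : q'.1 = ((2*b2 : ℕ) : ZMod 4) := by rw [← hb, val_cast_self]
          rw [nsmul_eq_mul, hq1c, ← Nat.cast_mul, ha]
          have : 2 * a2 * (2 * b2) = 4 * (a2 * b2) := by ring
          rw [this, Nat.cast_mul]
          have h4 : ((4:ℕ) : ZMod 4) = 0 := ZMod.natCast_self 4
          rw [h4, zero_mul]
        rw [hz4, sub_zero, hp'1]
      · show p'.2 - p'.2.val • q'.2 = 0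
        rw [hq'2, val_nsmul_one, sub_self]
    rwa [hr] at hmem
  have h01 : ((0 : ZMod 4), (1 : ZMod (2^(k+2)))) ∈ H := by
    have hmem : q' - q'.1.val • ((1 : ZMod 4), (0 : ZMod (2^(k+2)))) ∈ H :=
      AddSubgroup.sub_mem H hq'H (AddSubgroup.nsmul_mem H h10 _)
    have hs : q' - q'.1.val • ((1 : ZMod 4), (0 : ZMod (2^(k+2))))
        = ((0 : ZMod 4), (1 : ZMod (2^(k+2)))) := by
      refine Prod.ext ?_ ?_
      · show q'.1 - q'.1.val • (1 : ZMod 4) = 0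
        rw [val_nsmul_one, sub_self]
      · show q'.2 - q'.1.val • (0 : ZMod (2^(k+2))) = 1
        rw [smul_zero, sub_zero, hq'2]
    rwa [hs] at hmem
  rw [eq_top_iff]
  rintro ⟨a, b⟩ -
  have hab : ((a, b) : ZMod 4 × ZMod (2^(k+2)))
      = a.val • ((1 : ZMod 4), (0 : ZMod (2^(k+2))))
        + b.val • ((0 : ZMod 4), (1 : ZMod (2^(k+2)))) := by
    refine Prod.ext ?_ ?_
    · show a = a.val • (1 : ZMod 4) + b.val • (0 : ZMod 4)
      rw [val_nsmul_one, smul_zero, add_zero]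
    · show b = a.val • (0 : ZMod (2^(k+2))) + b.val • (1 : ZMod (2^(k+2)))
      rw [val_nsmul_one, smul_zero, zero_add]
  rw [hab]
  exact AddSubgroup.add_mem H (AddSubgroup.nsmul_mem H h10 _) (AddSubgroup.nsmul_mem H h01 _)

end Cover2

lemma numChains_eq_cTop (A : Type*) [AddGroup A] :
    numChains (Multiplicative A) = cTop (AddSubgroup A) := by
  have h1 : numChains (Multiplicative A) = cTop (Subgroup (Multiplicative A)) := rfl
  rw [h1]
  exact (cTop_congr (AddSubgroup.toSubgroup (A := A))).symm

lemma finite_addSubgroup (A : Type*) [AddGroup A] [Finite A] : Finite (AddSubgroup A) :=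
  Finite.of_equiv _ (AddSubgroup.toSubgroup (A := A)).toEquiv.symm

lemma range_map_eq_Iic {A B : Type*} [AddGroup A] [AddGroup B] (f : A →+ B)
    (hinj : Function.Injective f) (M : AddSubgroup B) (hr : f.range = M) :
    Set.range (AddSubgroup.map f) = Set.Iic M := by
  ext K
  constructor
  · rintro ⟨K', rfl⟩
    have : AddSubgroup.map f K' ≤ f.range := by
      rw [AddMonoidHom.range_eq_map]
      exact AddSubgroup.map_mono le_top
    exact hr ▸ this
  · intro hK
    refine ⟨AddSubgroup.comap f K, ?_⟩
    rw [AddSubgroup.map_comap_eq, hr]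
    exact inf_eq_right.2 hK

lemma count_below {A B : Type*} [AddGroup A] [AddGroup B] (f : A →+ B)
    (hinj : Function.Injective f) (M : AddSubgroup B) (hr : f.range = M) :
    (belowChains (AddSubgroup B) M).ncard = cNE (AddSubgroup A) :=
  ncard_belowChains_eq_cNE (AddSubgroup.map f) M
    (fun _ _ => AddSubgroup.map_le_map_iff_of_injective hinj)
    (range_map_eq_Iic f hinj M hr)

theorem main_k (k : ℕ) :
    (numChains (Multiplicative (ZMod 4 × ZMod (2 ^ (k+2)))) : ℤ) =
      2 * (2 * numChains (Multiplicative (ZMod 2 × ZMod (2 ^ (k+2))))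
        + numChains (Multiplicative (ZMod 4 × ZMod (2 ^ (k+1))))
        - 2 * numChains (Multiplicative (ZMod 2 × ZMod (2 ^ (k+1))))) := by
  haveI : Finite (AddSubgroup (ZMod 4 × ZMod (2 ^ (k+2)))) := finite_addSubgroup _
  haveI : Finite (AddSubgroup (ZMod 2 × ZMod (2 ^ (k+2)))) := finite_addSubgroup _
  haveI : Finite (AddSubgroup (ZMod 4 × ZMod (2 ^ (k+1)))) := finite_addSubgroup _
  haveI : Finite (AddSubgroup (ZMod 2 × ZMod (2 ^ (k+1)))) := finite_addSubgroup _
  have hcov : ∀ x : AddSubgroup (ZMod 4 × ZMod (2 ^ (k+2))), x ≠ ⊤ →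
      x ≤ M1 k ∨ x ≤ M2 k ∨ x ≤ M3 k := by
    intro x hx
    by_contra hc
    push_neg at hc
    exact hx (cover k x hc.1 hc.2.1 hc.2.2)
  have hie := main_ie (M1 k) (M2 k) (M3 k) (MD k) rfl (inf13 k) (inf23 k)
    (M1_ne_top k) (M2_ne_top k) (M3_ne_top k) hcov
  have a1 := count_below (psi1 k) (psi1_injective k) (M1 k) (range_psi1 k)
  have a2 := count_below (psi2 k) (psi2_injective k) (M2 k) (range_psi2 k)
  have a3 := count_below (psi3 k) (psi3_injective k) (M3 k) (range_psi3 k)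
  have aD := count_below (psiD k) (psiD_injective k) (MD k) (range_psiD k)
  have e1 := cNE_add_one_eq (AddSubgroup (ZMod 2 × ZMod (2 ^ (k+2))))
  have e2 := cNE_add_one_eq (AddSubgroup (ZMod 4 × ZMod (2 ^ (k+1))))
  have eD := cNE_add_one_eq (AddSubgroup (ZMod 2 × ZMod (2 ^ (k+1))))
  have n0 := numChains_eq_cTop (ZMod 4 × ZMod (2 ^ (k+2)))
  have n1 := numChains_eq_cTop (ZMod 2 × ZMod (2 ^ (k+2)))
  have n2 := numChains_eq_cTop (ZMod 4 × ZMod (2 ^ (k+1)))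
  have nD := numChains_eq_cTop (ZMod 2 × ZMod (2 ^ (k+1)))
  rw [a1, a2, a3, aD] at hie
  rw [n0, n1, n2, nD]
  rw [hie]
  push_cast [← e1, ← e2, ← eD]
  push_cast at e1 e2 eD
  omega

theorem numChains_zmod4_recurrence (n : ℕ) (hn : 2 ≤ n) :
    (numChains (Multiplicative (ZMod 4 × ZMod (2 ^ n))) : ℤ) =
      2 * (2 * numChains (Multiplicative (ZMod 2 × ZMod (2 ^ n)))
        + numChains (Multiplicative (ZMod 4 × ZMod (2 ^ (n - 1))))
        - 2 * numChains (Multiplicative (ZMod 2 × ZMod (2 ^ (n - 1))))) := by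
  obtain ⟨k, rfl⟩ : ∃ k, n = k + 2 := ⟨n - 2, by omega⟩
  have h1 : k + 2 - 1 = k + 1 := rfl
  rw [h1]
  exact main_k k
end

section
/- The number of distinct fuzzy subgroups of a finite group G, where fuzzy subgroups λ, μ : G → [0,1] are identified when (λ(a) > λ(b) ⇔ μ(a) > μ(b) for all a, b ∈ G), equals the number of chains of subgroups of G under strict inclusion whose maximal element is G. -/
/-- A fuzzy subgroup of `G`: a function `G → [0,1]` with
`f (a*b) ≥ min (f a) (f b)` and `f a⁻¹ ≥ f a`. -/
def IsFuzzySubgroup {G : Type*} [Group G] (f : G → ℝ) : Prop :=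
  (∀ a, f a ∈ Set.Icc (0 : ℝ) 1) ∧ (∀ a b, min (f a) (f b) ≤ f (a * b)) ∧ ∀ a, f a ≤ f a⁻¹

namespace FuzzyAux

open scoped Classical

variable {G : Type*} [Group G]

lemma one_ge {f : G → ℝ} (hf : IsFuzzySubgroup f) (a : G) : f a ≤ f 1 := by
  have h := hf.2.1 a a⁻¹
  rw [mul_inv_cancel] at h
  have : min (f a) (f a⁻¹) = f a := min_eq_left (hf.2.2 a)
  linarith [this ▸ h]

/-- The level subgroup of a fuzzy subgroup at the value `f a`. -/
def level (f : {f : G → ℝ // IsFuzzySubgroup f}) (a : G) : Subgroup G where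
  carrier := {x | f.1 a ≤ f.1 x}
  one_mem' := one_ge f.2 a
  mul_mem' := fun hx hy => le_trans (le_min hx hy) (f.2.2.1 _ _)
  inv_mem' := fun hx => le_trans hx (f.2.2.2 _)

lemma mem_level {f : {f : G → ℝ // IsFuzzySubgroup f}} {a x : G} :
    x ∈ level f a ↔ f.1 a ≤ f.1 x := Iff.rfl

variable [Finite G]

/-- The chain of level subgroups of a fuzzy subgroup. -/
noncomputable def chainOf (f : {f : G → ℝ // IsFuzzySubgroup f}) : Finset (Subgroup G) :=
  (Set.finite_range (level f)).toFinset

lemma mem_chainOf {f : {f : G → ℝ // IsFuzzySubgroup f}} {H : Subgroup G} :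
    H ∈ chainOf f ↔ ∃ a, level f a = H := by
  simp [chainOf, Set.Finite.mem_toFinset]

lemma chainOf_isChain (f : {f : G → ℝ // IsFuzzySubgroup f}) :
    IsChain (· ≤ ·) ((chainOf f : Finset (Subgroup G)) : Set (Subgroup G)) := by
  intro H hH K hK _
  rw [Finset.mem_coe, mem_chainOf] at hH hK
  obtain ⟨a, rfl⟩ := hH
  obtain ⟨b, rfl⟩ := hK
  rcases le_total (f.1 a) (f.1 b) with h | h
  · right; intro x hx; exact le_trans h hx
  · left; intro x hx; exact le_trans h hx

lemma top_mem_chainOf (f : {f : G → ℝ // IsFuzzySubgroup f}) :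
    (⊤ : Subgroup G) ∈ chainOf f := by
  obtain ⟨a, ha⟩ := Finite.exists_min f.1
  rw [mem_chainOf]
  exact ⟨a, by rw [Subgroup.eq_top_iff']; intro x; exact ha x⟩

lemma chainOf_congr {f g : {f : G → ℝ // IsFuzzySubgroup f}}
    (h : ∀ a b : G, f.1 a > f.1 b ↔ g.1 a > g.1 b) : chainOf f = chainOf g := by
  have hl : ∀ a, level f a = level g a := by
    intro a
    ext x
    simp only [mem_level, ← not_lt]
    exact not_congr (h a x)
  simp [chainOf]
  congr 1
  ext H
  rw [hl H]

/-- Count of members of `C` containing `x`. -/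
noncomputable def cnt (C : Finset (Subgroup G)) (x : G) : ℕ :=
  (C.filter fun H => x ∈ H).card

/-- The canonical fuzzy subgroup attached to a chain. -/
noncomputable def fC (C : Finset (Subgroup G)) (x : G) : ℝ :=
  (cnt C x : ℝ) / (C.card : ℝ)

lemma filter_nested (C : Finset (Subgroup G))
    (hC : IsChain (· ≤ ·) (C : Set (Subgroup G))) (a b : G) :
    (C.filter fun H => a ∈ H) ⊆ (C.filter fun H => b ∈ H) ∨
    (C.filter fun H => b ∈ H) ⊆ (C.filter fun H => a ∈ H) := by
  by_contra hcon
  push_neg at hcon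
  obtain ⟨h1, h2⟩ := hcon
  obtain ⟨H, hHa, hHb⟩ := Finset.not_subset.mp h1
  obtain ⟨K, hKb, hKa⟩ := Finset.not_subset.mp h2
  simp only [Finset.mem_filter, not_and] at hHa hHb hKb hKa
  have hne : H ≠ K := by
    rintro rfl
    exact hKa hHa.1 hHa.2
  rcases hC hHa.1 hKb.1 hne with h | h
  · exact hKa hKb.1 (h hHa.2)
  · exact hHb hHa.1 (h hKb.2)

lemma card_pos {C : Finset (Subgroup G)} (htop : (⊤ : Subgroup G) ∈ C) :
    0 < C.card := Finset.card_pos.mpr ⟨⊤, htop⟩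

lemma cnt_le (C : Finset (Subgroup G)) (x : G) : cnt C x ≤ C.card :=
  Finset.card_le_card (Finset.filter_subset _ _)

lemma fC_le_iff {C : Finset (Subgroup G)} (htop : (⊤ : Subgroup G) ∈ C) {a b : G} :
    fC C a ≤ fC C b ↔ cnt C a ≤ cnt C b := by
  have hk : (0 : ℝ) < (C.card : ℝ) := by exact_mod_cast card_pos htop
  rw [fC, fC, div_le_div_iff_of_pos_right hk, Nat.cast_le]

lemma fC_lt_iff {C : Finset (Subgroup G)} (htop : (⊤ : Subgroup G) ∈ C) {a b : G} :
    fC C a < fC C b ↔ cnt C a < cnt C b := by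
  simp only [← not_le, fC_le_iff htop]

lemma fC_fuzzy {C : Finset (Subgroup G)} (hC : IsChain (· ≤ ·) (C : Set (Subgroup G)))
    (htop : (⊤ : Subgroup G) ∈ C) : IsFuzzySubgroup (fC C) := by
  have hk : (0 : ℝ) < (C.card : ℝ) := by exact_mod_cast card_pos htop
  refine ⟨fun a => ⟨div_nonneg (Nat.cast_nonneg _) hk.le, ?_⟩, fun a b => ?_, fun a => ?_⟩
  · rw [fC, div_le_one hk]
    exact_mod_cast cnt_le C a
  · have key : ∀ x y : G,
        (C.filter fun H => x ∈ H) ⊆ (C.filter fun H => y ∈ H) →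
        fC C x ≤ fC C (x * y) ∧ fC C x ≤ fC C (y * x) := by
      intro x y hsub
      constructor <;> rw [fC_le_iff htop] <;> apply Finset.card_le_card <;>
        intro H hH <;> have h2 := hsub hH <;>
        simp only [Finset.mem_filter] at hH h2 ⊢
      · exact ⟨hH.1, mul_mem hH.2 h2.2⟩
      · exact ⟨hH.1, mul_mem h2.2 hH.2⟩
    rcases filter_nested C hC a b with h | h
    · exact le_trans (min_le_left _ _) (key a b h).1
    · exact le_trans (min_le_right _ _) (key b a h).2
  · rw [fC_le_iff htop]
    apply Finset.card_le_card
    intro H hH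
    simp only [Finset.mem_filter] at hH ⊢
    exact ⟨hH.1, inv_mem hH.2⟩

lemma cnt_chainOf_lt_iff (f : {f : G → ℝ // IsFuzzySubgroup f}) (a b : G) :
    cnt (chainOf f) b < cnt (chainOf f) a ↔ f.1 b < f.1 a := by
  have mono : ∀ x y : G, f.1 x ≤ f.1 y →
      ((chainOf f).filter fun H => x ∈ H) ⊆ ((chainOf f).filter fun H => y ∈ H) := by
    intro x y hxy H hH
    rw [Finset.mem_filter] at hH ⊢
    obtain ⟨hHC, hx⟩ := hH
    refine ⟨hHC, ?_⟩
    obtain ⟨c, rfl⟩ := mem_chainOf.mp hHC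
    exact le_trans (mem_level.mp hx) hxy
  constructor
  · intro h
    by_contra hle
    push_neg at hle
    unfold cnt at h
    exact absurd (Finset.card_le_card (mono a b hle)) (not_le.mpr h)
  · intro h
    apply Finset.card_lt_card
    refine ⟨mono b a h.le, fun hsub => ?_⟩
    have h1 : level f a ∈ (chainOf f).filter fun H => a ∈ H :=
      Finset.mem_filter.mpr ⟨mem_chainOf.mpr ⟨a, rfl⟩, mem_level.mpr le_rfl⟩
    have h2 := Finset.mem_filter.mp (hsub h1)
    exact absurd (mem_level.mp h2.2) (not_le.mpr h)

lemma level_fC_eq {C : Finset (Subgroup G)} (hC : IsChain (· ≤ ·) (C : Set (Subgroup G)))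
    (htop : (⊤ : Subgroup G) ∈ C) (a : G) (H₀ : Subgroup G)
    (hmem : H₀ ∈ C.filter fun H => a ∈ H)
    (hmin : ∀ K ∈ C.filter (fun H => a ∈ H), H₀ ≤ K) :
    level ⟨fC C, fC_fuzzy hC htop⟩ a = H₀ := by
  ext x
  rw [mem_level]
  show fC C a ≤ fC C x ↔ x ∈ H₀
  rw [fC_le_iff htop]
  constructor
  · intro hle
    rcases filter_nested C hC a x with h | h
    · exact (Finset.mem_filter.mp (h hmem)).2
    · have heq : (C.filter fun H => x ∈ H) = (C.filter fun H => a ∈ H) :=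
        Finset.eq_of_subset_of_card_le h hle
      have : H₀ ∈ C.filter fun H => x ∈ H := heq ▸ hmem
      exact (Finset.mem_filter.mp this).2
  · intro hx
    apply Finset.card_le_card
    intro K hK
    rw [Finset.mem_filter] at hK ⊢
    exact ⟨hK.1, hmin K (Finset.mem_filter.mpr hK) hx⟩

lemma exists_min_filter {C : Finset (Subgroup G)} (hC : IsChain (· ≤ ·) (C : Set (Subgroup G)))
    (htop : (⊤ : Subgroup G) ∈ C) (a : G) :
    ∃ H₀ ∈ C.filter (fun H => a ∈ H), ∀ K ∈ C.filter (fun H => a ∈ H), H₀ ≤ K := by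
  have hne : (C.filter fun H => a ∈ H).Nonempty :=
    ⟨⊤, Finset.mem_filter.mpr ⟨htop, Subgroup.mem_top a⟩⟩
  obtain ⟨H₀, hH₀⟩ := Finset.exists_minimal hne
  have hmem : H₀ ∈ C.filter (fun H => a ∈ H) := hH₀.1
  have hmin : ∀ K ∈ C.filter (fun H => a ∈ H), ¬ K < H₀ := fun K hK => hH₀.not_lt hK
  refine ⟨H₀, hmem, fun K hK => ?_⟩
  rcases eq_or_ne K H₀ with rfl | hne'
  · exact le_rfl
  rcases hC (Finset.mem_filter.mp hmem).1 (Finset.mem_filter.mp hK).1 hne'.symm with h | h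
  · exact h
  · exact absurd (lt_of_le_of_ne h hne') (hmin K hK)

lemma chainOf_fC {C : Finset (Subgroup G)} (hC : IsChain (· ≤ ·) (C : Set (Subgroup G)))
    (htop : (⊤ : Subgroup G) ∈ C) :
    chainOf ⟨fC C, fC_fuzzy hC htop⟩ = C := by
  apply Finset.Subset.antisymm
  · intro H hH
    obtain ⟨a, rfl⟩ := mem_chainOf.mp hH
    obtain ⟨H₀, hmem, hmin⟩ := exists_min_filter hC htop a
    rw [level_fC_eq hC htop a H₀ hmem hmin]
    exact (Finset.mem_filter.mp hmem).1
  · intro H hH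
    rw [mem_chainOf]
    by_cases hD : ∃ K ∈ C, K < H
    · have hne : (C.filter fun K => K < H).Nonempty := by
        obtain ⟨K, hK, hKH⟩ := hD
        exact ⟨K, Finset.mem_filter.mpr ⟨hK, hKH⟩⟩
      obtain ⟨K₀, hK₀'⟩ := Finset.exists_maximal hne
      have hK₀ : K₀ ∈ C.filter fun K => K < H := hK₀'.1
      have hmax : ∀ K ∈ C.filter (fun K => K < H), ¬ K₀ < K := fun K hK => hK₀'.not_gt hK
      rw [Finset.mem_filter] at hK₀
      obtain ⟨a, haH, haK₀⟩ := SetLike.exists_of_lt hK₀.2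
      refine ⟨a, level_fC_eq hC htop a H (Finset.mem_filter.mpr ⟨hH, haH⟩) ?_⟩
      intro K hK
      rw [Finset.mem_filter] at hK
      rcases eq_or_ne K H with rfl | hne'
      · exact le_rfl
      rcases hC hK.1 hH hne' with h | h
      · exfalso
        have hKD : K ∈ C.filter fun K => K < H :=
          Finset.mem_filter.mpr ⟨hK.1, lt_of_le_of_ne h hne'⟩
        rcases eq_or_ne K K₀ with rfl | hne''
        · exact haK₀ hK.2
        rcases hC hK.1 hK₀.1 hne'' with h2 | h2
        · exact haK₀ (h2 hK.2)
        · exact hmax K hKD (lt_of_le_of_ne h2 (Ne.symm hne''))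
      · exact h
    · push_neg at hD
      refine ⟨1, level_fC_eq hC htop 1 H (Finset.mem_filter.mpr ⟨hH, one_mem H⟩) ?_⟩
      intro K hK
      rw [Finset.mem_filter] at hK
      rcases eq_or_ne K H with rfl | hne'
      · exact le_rfl
      rcases hC hK.1 hH hne' with h | h
      · exact absurd (lt_of_le_of_ne h hne') (hD K hK.1)
      · exact h

end FuzzyAux

theorem card_fuzzy_subgroups_eq_numChains {G : Type*} [Group G] [Finite G] :
    Nat.card (Quot (fun f g : {f : G → ℝ // IsFuzzySubgroup f} =>
      ∀ a b : G, f.1 a > f.1 b ↔ g.1 a > g.1 b)) = numChains G := by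
  apply Nat.card_congr
  refine
    { toFun := Quot.lift
        (fun f => (⟨FuzzyAux.chainOf f, FuzzyAux.chainOf_isChain f, FuzzyAux.top_mem_chainOf f⟩ :
          {C : Finset (Subgroup G) //
            IsChain (· ≤ ·) (C : Set (Subgroup G)) ∧ (⊤ : Subgroup G) ∈ C}))
        (fun f g h => Subtype.ext (FuzzyAux.chainOf_congr h))
      invFun := fun C => Quot.mk _ ⟨FuzzyAux.fC C.1, FuzzyAux.fC_fuzzy C.2.1 C.2.2⟩
      left_inv := ?_
      right_inv := ?_ }
  · intro q
    induction q using Quot.ind with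
    | mk f =>
      apply Quot.sound
      intro a b
      rw [gt_iff_lt, gt_iff_lt]
      show FuzzyAux.fC (FuzzyAux.chainOf f) b < FuzzyAux.fC (FuzzyAux.chainOf f) a ↔ _
      rw [FuzzyAux.fC_lt_iff (FuzzyAux.top_mem_chainOf f)]
      exact FuzzyAux.cnt_chainOf_lt_iff f a b
  · intro C
    exact Subtype.ext (FuzzyAux.chainOf_fC C.2.1 C.2.2)
end
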